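/- Let T > 0. Let φ : (0,∞) → ℝ be a locally integrable function such that liminf_{t→∞} ∫_t^{t+T} φ(τ) dτ > 0 and limsup_{t→∞} ∫_t^{t+T} φ⁻(τ) dτ < ∞, where φ⁻ = max{−φ, 0}. Let ψ : (0,∞) → ℝ be a measurable function with ψ(t) → 0 as t → ∞. Suppose ξ : (0,∞) → [0,∞) is a nonnegative, locally absolutely continuous function satisfying dξ/dt + φ ξ ≤ ψ almost everywhere on (0,∞). Then ξ(t) → 0 as t → ∞. -/

import Mathlib

open Filter MeasureTheory Set

lemma fubini_triangle {a b : ℝ} (hab : a ≤ b) {g h : ℝ → ℝ}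
    (hg : IntegrableOn g (Ioc a b)) (hh : IntegrableOn h (Ioc a b)) :
    ∫ t in Ioc a b, h t * ∫ s in Ioc a t, g s
      = ∫ s in Ioc a b, g s * ∫ t in Ioc s b, h t := by
  set μ := volume.restrict (Ioc a b)
  have hmeas : MeasurableSet {p : ℝ × ℝ | p.2 ≤ p.1} :=
    measurableSet_le measurable_snd measurable_fst
  set k : ℝ × ℝ → ℝ := {p : ℝ × ℝ | p.2 ≤ p.1}.indicator (fun p => h p.1 * g p.2) with hk
  have hint : Integrable k (μ.prod μ) := by
    refine (Integrable.mul_prod hh.norm hg.norm).mono' ?_ ?_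
    · exact (hh.aestronglyMeasurable.comp_fst.mul hg.aestronglyMeasurable.comp_snd).indicator hmeas
    · refine Eventually.of_forall fun p => ?_
      by_cases hp : p ∈ {p : ℝ × ℝ | p.2 ≤ p.1} <;>
        simp [hk, indicator_of_mem, indicator_of_notMem, hp, abs_nonneg, abs_mul, mul_nonneg,
          abs_nonneg, le_refl]
  have swap := MeasureTheory.integral_integral_swap (f := fun t s => k (t, s)) (μ := μ) (ν := μ)
    (by exact hint)
  have h1 : ∀ t ∈ Ioc a b, (∫ s, k (t, s) ∂μ) = h t * ∫ s in Ioc a t, g s := by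
    intro t ht
    have : (fun s => k (t, s)) = (Iic t).indicator (fun s => h t * g s) := by
      funext s
      by_cases hs : s ≤ t <;> simp [hk, indicator_of_mem, indicator_of_notMem, hs]
    rw [this, integral_indicator measurableSet_Iic]
    rw [Measure.restrict_restrict measurableSet_Iic]
    have : Iic t ∩ Ioc a b = Ioc a t := by
      ext x; simp only [mem_inter_iff, mem_Iic, mem_Ioc]
      constructor
      · rintro ⟨h1, h2, h3⟩; exact ⟨h2, h1⟩
      · rintro ⟨h1, h2⟩; exact ⟨h2, h1, h2.trans ht.2⟩
    rw [this, integral_const_mul]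
  have h2 : ∀ s ∈ Ioc a b, (∫ t, k (t, s) ∂μ) = g s * ∫ t in Ioc s b, h t := by
    intro s hs
    have : (fun t => k (t, s)) = (Ici s).indicator (fun t => h t * g s) := by
      funext t
      by_cases h' : s ≤ t <;> simp [hk, indicator_of_mem, indicator_of_notMem, h']
    rw [this, integral_indicator measurableSet_Ici]
    rw [Measure.restrict_restrict measurableSet_Ici]
    have he : Ici s ∩ Ioc a b = Icc s b := by
      ext x; simp only [mem_inter_iff, mem_Ici, mem_Ioc, mem_Icc]
      constructor
      · rintro ⟨h1, h2, h3⟩; exact ⟨h1, h3⟩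
      · rintro ⟨h1, h2⟩; exact ⟨h1, hs.1.trans_le h1, h2⟩
    rw [he, integral_Icc_eq_integral_Ioc]
    simp_rw [mul_comm (h _) (g s)]
    rw [integral_const_mul]
  calc ∫ t in Ioc a b, h t * ∫ s in Ioc a t, g s
      = ∫ t, (∫ s, k (t, s) ∂μ) ∂μ := by
        refine (setIntegral_congr_fun measurableSet_Ioc fun t ht => ?_).symm
        exact h1 t ht
    _ = ∫ s, (∫ t, k (t, s) ∂μ) ∂μ := swap
    _ = ∫ s in Ioc a b, g s * ∫ t in Ioc s b, h t := by
        refine setIntegral_congr_fun measurableSet_Ioc fun s hs => ?_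
        exact h2 s hs

/-- primitive of `g` based at `a`. -/
noncomputable def primI (a : ℝ) (g : ℝ → ℝ) (t : ℝ) : ℝ := ∫ s in Ioc a t, g s

lemma integrableOn_mul_cont {a b : ℝ} {g u : ℝ → ℝ} (hg : IntegrableOn g (Ioc a b))
    (hu : ContinuousOn u (Icc a b)) :
    IntegrableOn (fun t => g t * u t) (Ioc a b) := by
  obtain ⟨B, hB⟩ := isCompact_Icc.exists_bound_of_continuousOn hu
  have h1 : IntegrableOn (fun t => u t * g t) (Ioc a b) := by
    refine hg.bdd_mul (c := B) ?_ ?_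
    · exact (hu.mono Ioc_subset_Icc_self).aestronglyMeasurable measurableSet_Ioc
    · exact (ae_restrict_iff' measurableSet_Ioc).2
        (Eventually.of_forall fun t ht => hB t (Ioc_subset_Icc_self ht))
  simpa [mul_comm] using h1

lemma contPrimI {a b : ℝ} {g : ℝ → ℝ} (hg : IntegrableOn g (Ioc a b)) :
    ContinuousOn (primI a g) (Icc a b) := by
  apply intervalIntegral.continuousOn_primitive
  exact (integrableOn_Icc_iff_integrableOn_Ioc).2 hg

lemma ioc_split {a s x : ℝ} {u : ℝ → ℝ} (has : a ≤ s) (hsx : s ≤ x)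
    (hu : IntegrableOn u (Ioc a x)) :
    ∫ t in Ioc a x, u t = (∫ t in Ioc a s, u t) + ∫ t in Ioc s x, u t := by
  rw [← setIntegral_union (Ioc_disjoint_Ioc_of_le le_rfl) measurableSet_Ioc
    (hu.mono_set (Ioc_subset_Ioc le_rfl hsx)) (hu.mono_set (Ioc_subset_Ioc has le_rfl)),
    Ioc_union_Ioc_eq_Ioc has hsx]

lemma pow_identity {a b : ℝ} (hab : a ≤ b) {g : ℝ → ℝ} (hg : IntegrableOn g (Ioc a b)) (n : ℕ) :
    ∀ x ∈ Icc a b, ∫ t in Ioc a x, g t * (primI a g t) ^ n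
      = (primI a g x) ^ (n + 1) / (n + 1) := by
  have hcontF : ContinuousOn (primI a g) (Icc a b) := contPrimI hg
  have hint : ∀ m : ℕ, IntegrableOn (fun t => g t * primI a g t ^ m) (Ioc a b) := fun m =>
    integrableOn_mul_cont hg (hcontF.pow m)
  induction n with
  | zero => intro x hx; simp [primI]
  | succ n ih =>
    intro x hx
    have hax : a ≤ x := hx.1
    have hgx : IntegrableOn g (Ioc a x) := hg.mono_set (Ioc_subset_Ioc le_rfl hx.2)
    have hintx : ∀ m : ℕ, IntegrableOn (fun t => g t * primI a g t ^ m) (Ioc a x) := fun m =>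
      (hint m).mono_set (Ioc_subset_Ioc le_rfl hx.2)
    have key : ∫ t in Ioc a x, g t * primI a g t ^ (n + 1)
        = ∫ s in Ioc a x, g s * ∫ t in Ioc s x, g t * primI a g t ^ n := by
      have h0 := fubini_triangle hax hgx (hintx n)
      calc ∫ t in Ioc a x, g t * primI a g t ^ (n + 1)
          = ∫ t in Ioc a x, (g t * primI a g t ^ n) * primI a g t := by
            refine setIntegral_congr_fun measurableSet_Ioc fun t _ => ?_; ring
        _ = ∫ s in Ioc a x, g s * ∫ t in Ioc s x, g t * primI a g t ^ n := h0
    have split : ∀ s ∈ Ioc a x, ∫ t in Ioc s x, g t * primI a g t ^ n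
        = primI a g x ^ (n + 1) / (n + 1) - primI a g s ^ (n + 1) / (n + 1) := by
      intro s hs
      have hdecomp := ioc_split hs.1.le hs.2 (u := fun t => g t * primI a g t ^ n) (hintx n)
      have ihx := ih x hx
      have ihs := ih s ⟨hs.1.le, hs.2.trans hx.2⟩
      linarith [hdecomp, ihx, ihs]
    have key2 : (∫ t in Ioc a x, g t * primI a g t ^ (n + 1))
        = primI a g x * (primI a g x ^ (n + 1) / (n + 1))
          - (∫ t in Ioc a x, g t * primI a g t ^ (n + 1)) / (n + 1) := by
      have hcongr : ∫ s in Ioc a x, g s * ∫ t in Ioc s x, g t * primI a g t ^ n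
          = ∫ s in Ioc a x, (g s * (primI a g x ^ (n + 1) / (n + 1))
              - g s * primI a g s ^ (n + 1) / (n + 1)) := by
        refine setIntegral_congr_fun measurableSet_Ioc fun s hs => ?_
        rw [split s hs]; ring
      conv_lhs => rw [key, hcongr]
      rw [integral_sub (hgx.mul_const _) ((hintx (n+1)).div_const _),
        integral_mul_const, integral_div]
      simp only [primI]
    have hpos1 : ((n : ℝ) + 1) ≠ 0 := by positivity
    have hpos2 : ((n : ℝ) + 1 + 1) ≠ 0 := by positivity
    push_cast
    rw [eq_div_iff hpos2]
    field_simp at key2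
    have hp : primI a g x ^ (n + 1 + 1) = primI a g x * primI a g x ^ (n + 1) := by ring
    linarith [key2, hp]

lemma exp_identity {a b : ℝ} (hab : a ≤ b) {g : ℝ → ℝ} (hg : IntegrableOn g (Ioc a b)) :
    ∀ x ∈ Icc a b, ∫ t in Ioc a x, g t * Real.exp (primI a g t)
      = Real.exp (primI a g x) - 1 := by
  intro x hx
  have hcontF : ContinuousOn (primI a g) (Icc a b) := contPrimI hg
  obtain ⟨B, hB⟩ := isCompact_Icc.exists_bound_of_continuousOn hcontF
  have hB0 : 0 ≤ B := (norm_nonneg _).trans (hB a ⟨le_rfl, hab⟩)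
  have hgx : IntegrableOn g (Ioc a x) := hg.mono_set (Ioc_subset_Ioc le_rfl hx.2)
  set μ := volume.restrict (Ioc a x) with hμ
  set Fn : ℕ → ℝ → ℝ := fun n t => g t * primI a g t ^ n / (n.factorial : ℝ) with hFn
  have hF_int : ∀ n, Integrable (Fn n) μ := fun n =>
    ((integrableOn_mul_cont hg (hcontF.pow n)).mono_set
      (Ioc_subset_Ioc le_rfl hx.2)).div_const _
  have hnormbd : ∀ n, (∫ t, ‖Fn n t‖ ∂μ) ≤ B ^ n / (n.factorial : ℝ) * ∫ t, ‖g t‖ ∂μ := by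
    intro n
    rw [← integral_const_mul]
    refine integral_mono_of_nonneg (Eventually.of_forall fun t => norm_nonneg _)
      ((hgx.norm).const_mul _) ?_
    refine (ae_restrict_iff' measurableSet_Ioc).2 (Eventually.of_forall fun t ht => ?_)
    have hFt : ‖primI a g t‖ ≤ B := hB t ⟨ht.1.le, ht.2.trans hx.2⟩
    have h1 : ‖Fn n t‖ = ‖g t‖ * ‖primI a g t‖ ^ n / (n.factorial : ℝ) := by
      simp [hFn, abs_mul, abs_div, abs_pow, Nat.abs_cast]
    simp only
    rw [h1]
    have h2 : ‖primI a g t‖ ^ n ≤ B ^ n :=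
      pow_le_pow_left₀ (norm_nonneg _) hFt n
    calc ‖g t‖ * ‖primI a g t‖ ^ n / (n.factorial : ℝ)
        ≤ ‖g t‖ * B ^ n / (n.factorial : ℝ) := by gcongr
      _ = B ^ n / (n.factorial : ℝ) * ‖g t‖ := by ring
  have hF_sum : Summable fun n => ∫ t, ‖Fn n t‖ ∂μ := by
    refine Summable.of_nonneg_of_le (fun n => integral_nonneg fun t => norm_nonneg _)
      hnormbd ?_
    exact (Real.summable_pow_div_factorial B).mul_right _
  have hsum := hasSum_integral_of_summable_integral_norm hF_int hF_sum
  have hptw : ∀ t : ℝ, (∑' n, Fn n t) = g t * Real.exp (primI a g t) := by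
    intro t
    rw [Real.exp_eq_exp_ℝ, NormedSpace.exp_eq_tsum_div]
    simp only [hFn]
    rw [← tsum_mul_left]
    congr 1 with n
    ring
  have hterm : ∀ n, (∫ t, Fn n t ∂μ) = primI a g x ^ (n + 1) / ((n+1).factorial : ℝ) := by
    intro n
    simp only [hFn]
    rw [integral_div]
    rw [pow_identity hab hg n x hx]
    rw [Nat.factorial_succ]
    push_cast
    have h3 : ((n:ℝ) + 1) ≠ 0 := by positivity
    have h4 : (n.factorial : ℝ) ≠ 0 := by positivity
    field_simp
  have hsum2 : HasSum (fun n => primI a g x ^ (n + 1) / ((n + 1).factorial : ℝ))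
      (Real.exp (primI a g x) - 1) := by
    have he : HasSum (fun n => primI a g x ^ n / (n.factorial : ℝ)) (Real.exp (primI a g x)) := by
      have := (Real.summable_pow_div_factorial (primI a g x)).hasSum
      rwa [show ∑' n, primI a g x ^ n / (n.factorial : ℝ) = Real.exp (primI a g x) by
        rw [Real.exp_eq_exp_ℝ, NormedSpace.exp_eq_tsum_div]] at this
    have := (hasSum_nat_add_iff' 1).2 he
    simpa using this
  have : HasSum (fun n => ∫ t, Fn n t ∂μ) (∫ t, g t * Real.exp (primI a g t) ∂μ) := by
    rw [show (fun t => g t * Real.exp (primI a g t)) = fun t => ∑' n, Fn n t from funext fun t => (hptw t).symm]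
    exact hsum
  rw [funext hterm] at this
  exact (this.unique hsum2).symm ▸ rfl

lemma product_FTC {a b : ℝ} (hab : a ≤ b) {g ξd ξ : ℝ → ℝ}
    (hg : IntegrableOn g (Ioc a b)) (hd : IntegrableOn ξd (Ioc a b))
    (hξint : ∀ s ∈ Icc a b, ξ s = ξ a + ∫ t in Ioc a s, ξd t) :
    ξ b * Real.exp (primI a g b) - ξ a
      = ∫ t in Ioc a b, (ξd t + g t * ξ t) * Real.exp (primI a g t) := by
  set E : ℝ → ℝ := fun t => Real.exp (primI a g t) with hE
  have hcontF : ContinuousOn (primI a g) (Icc a b) := contPrimI hg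
  have hcontE : ContinuousOn E (Icc a b) := Real.continuous_exp.comp_continuousOn hcontF
  have hcontξ : ContinuousOn ξ (Icc a b) := by
    have h1 : ContinuousOn (fun s => ξ a + ∫ t in Ioc a s, ξd t) (Icc a b) :=
      continuousOn_const.add (intervalIntegral.continuousOn_primitive
        ((integrableOn_Icc_iff_integrableOn_Ioc).2 hd))
    exact ContinuousOn.congr h1 fun s hs => hξint s hs
  have IgE : IntegrableOn (fun t => g t * E t) (Ioc a b) := integrableOn_mul_cont hg hcontE
  have I1 : IntegrableOn (fun t => ξd t * E t) (Ioc a b) := integrableOn_mul_cont hd hcontE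
  have I2 : IntegrableOn (fun t => g t * (ξ t * E t)) (Ioc a b) :=
    integrableOn_mul_cont hg (hcontξ.mul hcontE)
  have I2' : IntegrableOn (fun t => g t * E t * ξ t) (Ioc a b) := by
    refine I2.congr_fun (fun t _ => by ring) measurableSet_Ioc
  have hcontP : ContinuousOn (primI a (fun s => g s * E s)) (Icc a b) := contPrimI IgE
  have I3 : IntegrableOn (fun t => ξd t * primI a (fun s => g s * E s) t) (Ioc a b) :=
    integrableOn_mul_cont hd hcontP
  have keyE : ∀ t ∈ Icc a b, E t = 1 + primI a (fun s => g s * E s) t := by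
    intro t ht
    have := exp_identity hab hg t ht
    simp only [primI, hE] at *
    linarith [this]
  have step1 : ∫ t in Ioc a b, ξd t * E t
      = (∫ t in Ioc a b, ξd t) + ∫ t in Ioc a b, ξd t * primI a (fun s => g s * E s) t := by
    rw [← integral_add hd I3]
    refine setIntegral_congr_fun measurableSet_Ioc fun t ht => ?_
    have := keyE t ⟨ht.1.le, ht.2⟩
    rw [this]; ring
  have step2 : ∫ t in Ioc a b, ξd t * primI a (fun s => g s * E s) t
      = ∫ s in Ioc a b, g s * E s * ∫ t in Ioc s b, ξd t := by
    have := fubini_triangle hab IgE hd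
    simpa [primI] using this
  have step3 : ∀ s ∈ Ioc a b, (∫ t in Ioc s b, ξd t) = ξ b - ξ s := by
    intro s hs
    have hsplit := ioc_split hs.1.le hs.2 hd
    have hb := hξint b ⟨hab, le_rfl⟩
    have hs' := hξint s ⟨hs.1.le, hs.2⟩
    linarith [hsplit]
  have step4 : ∫ s in Ioc a b, g s * E s * ∫ t in Ioc s b, ξd t
      = ξ b * (∫ s in Ioc a b, g s * E s) - ∫ s in Ioc a b, g s * E s * ξ s := by
    have hcongr : ∫ s in Ioc a b, g s * E s * ∫ t in Ioc s b, ξd t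
        = ∫ s in Ioc a b, (g s * E s * ξ b - g s * E s * ξ s) := by
      refine setIntegral_congr_fun measurableSet_Ioc fun s hs => ?_
      rw [step3 s hs]; ring
    rw [hcongr, integral_sub (IgE.mul_const _) I2']
    rw [integral_mul_const]
    ring
  have hexpb : (∫ s in Ioc a b, g s * E s) = E b - 1 :=
    exp_identity hab hg b ⟨hab, le_rfl⟩
  have hsum : ∫ t in Ioc a b, (ξd t + g t * ξ t) * E t
      = (∫ t in Ioc a b, ξd t * E t) + ∫ t in Ioc a b, g t * E t * ξ t := by
    rw [← integral_add I1 I2']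
    refine setIntegral_congr_fun measurableSet_Ioc fun t _ => ?_
    ring
  have hFTCb : (∫ t in Ioc a b, ξd t) = ξ b - ξ a := by
    have := hξint b ⟨hab, le_rfl⟩; linarith
  rw [hsum, step1, step2, step4, hexpb, hFTCb]
  ring

lemma gronwall_window {a b ε : ℝ} (hab : a ≤ b) {φ ψ ξ ξd : ℝ → ℝ}
    (hsub : Ioc a b ⊆ Ioi (0:ℝ))
    (hφ : IntegrableOn φ (Ioc a b)) (hd : IntegrableOn ξd (Ioc a b))
    (hξint : ∀ s ∈ Icc a b, ξ s = ξ a + ∫ t in Ioc a s, ξd t)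
    (hψmeas : Measurable ψ) (hε : 0 ≤ ε) (hψb : ∀ t ∈ Ioc a b, |ψ t| ≤ ε)
    (hineq : ∀ᵐ t ∂(volume : Measure ℝ), t ∈ Ioi (0:ℝ) → ξd t + φ t * ξ t ≤ ψ t) :
    ξ b ≤ ξ a * Real.exp (-(∫ t in Ioc a b, φ t))
      + ε * (b - a) * Real.exp (∫ t in Ioc a b, max (-φ t) 0) := by
  set F : ℝ → ℝ := primI a φ with hF
  set E : ℝ → ℝ := fun t => Real.exp (F t) with hE
  have hcontF : ContinuousOn F (Icc a b) := contPrimI hφ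
  have hcontE : ContinuousOn E (Icc a b) := Real.continuous_exp.comp_continuousOn hcontF
  have hcontξ : ContinuousOn ξ (Icc a b) := by
    have h1 : ContinuousOn (fun s => ξ a + ∫ t in Ioc a s, ξd t) (Icc a b) :=
      continuousOn_const.add (intervalIntegral.continuousOn_primitive
        ((integrableOn_Icc_iff_integrableOn_Ioc).2 hd))
    exact ContinuousOn.congr h1 fun s hs => hξint s hs
  have hφm : IntegrableOn (fun t => max (-φ t) 0) (Ioc a b) := by
    exact hφ.neg.pos_part
  have Iψ : IntegrableOn ψ (Ioc a b) := by
    refine Integrable.mono' (g := fun _ => ε) (integrableOn_const measure_Ioc_lt_top.ne)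
      hψmeas.aestronglyMeasurable ?_
    exact (ae_restrict_iff' measurableSet_Ioc).2 (Eventually.of_forall fun t ht => hψb t ht)
  have IψE : IntegrableOn (fun t => ψ t * E t) (Ioc a b) := integrableOn_mul_cont Iψ hcontE
  have ILHS : IntegrableOn (fun t => (ξd t + φ t * ξ t) * E t) (Ioc a b) :=
    integrableOn_mul_cont (hd.add (integrableOn_mul_cont hφ hcontξ)) hcontE
  have stepA : ξ b * E b - ξ a ≤ ∫ t in Ioc a b, ψ t * E t := by
    rw [product_FTC hab hφ hd hξint]
    refine setIntegral_mono_ae_restrict ILHS IψE ?_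
    have h1 : ∀ᵐ t ∂(volume.restrict (Ioc a b)), t ∈ Ioi (0:ℝ) → ξd t + φ t * ξ t ≤ ψ t :=
      ae_restrict_of_ae hineq
    have h2 : ∀ᵐ t ∂(volume.restrict (Ioc a b)), t ∈ Ioc a b :=
      ae_restrict_mem measurableSet_Ioc
    filter_upwards [h1, h2] with t h1t h2t
    exact mul_le_mul_of_nonneg_right (h1t (hsub h2t)) (Real.exp_pos _).le
  have hD : ∀ t ∈ Ioc a b, F t - F b ≤ ∫ s in Ioc a b, max (-φ s) 0 := by
    intro t ht
    have hsplit := ioc_split ht.1.le ht.2 hφ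
    have h1 : -(∫ s in Ioc t b, φ s) ≤ ∫ s in Ioc t b, max (-φ s) 0 := by
      rw [← integral_neg]
      refine setIntegral_mono_on ((hφ.mono_set (Ioc_subset_Ioc ht.1.le le_rfl)).neg)
        (hφm.mono_set (Ioc_subset_Ioc ht.1.le le_rfl)) measurableSet_Ioc fun s _ => ?_
      exact le_max_left _ _
    have h2 : (∫ s in Ioc t b, max (-φ s) 0) ≤ ∫ s in Ioc a b, max (-φ s) 0 := by
      refine setIntegral_mono_set hφm ?_ (HasSubset.Subset.eventuallyLE
        (Ioc_subset_Ioc ht.1.le le_rfl))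
      exact (ae_restrict_iff' measurableSet_Ioc).2
        (Eventually.of_forall fun s _ => le_max_right _ _)
    have hFb : F b = F t + ∫ s in Ioc t b, φ s := by
      simp only [hF, primI]; linarith [hsplit]
    linarith
  have stepB : ξ b ≤ ξ a * Real.exp (-F b) + (∫ t in Ioc a b, ψ t * E t) * Real.exp (-F b) := by
    have h1 : (ξ b * E b - ξ a) * Real.exp (-F b) ≤ (∫ t in Ioc a b, ψ t * E t) * Real.exp (-F b) :=
      mul_le_mul_of_nonneg_right stepA (Real.exp_pos _).le
    have h2 : E b * Real.exp (-F b) = 1 := by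
      rw [hE, ← Real.exp_add]; simp
    have h3 : ξ b * E b * Real.exp (-F b) = ξ b := by rw [mul_assoc, h2, mul_one]
    have h4 : (ξ b * E b - ξ a) * Real.exp (-F b)
        = ξ b * E b * Real.exp (-F b) - ξ a * Real.exp (-F b) := by ring
    linarith [h1, h3, h4]
  have stepC : (∫ t in Ioc a b, ψ t * E t) * Real.exp (-F b)
      ≤ ε * (b - a) * Real.exp (∫ s in Ioc a b, max (-φ s) 0) := by
    rw [← integral_mul_const]
    have hconst : (∫ _t in Ioc a b, ε * Real.exp (∫ s in Ioc a b, max (-φ s) 0))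
        = ε * (b - a) * Real.exp (∫ s in Ioc a b, max (-φ s) 0) := by
      rw [setIntegral_const, smul_eq_mul, Real.volume_real_Ioc_of_le hab]
      ring
    rw [← hconst]
    refine setIntegral_mono_on (IψE.mul_const _)
      (integrableOn_const measure_Ioc_lt_top.ne) measurableSet_Ioc fun t ht => ?_
    have h1 : ψ t * E t * Real.exp (-F b) = ψ t * Real.exp (F t - F b) := by
      simp only [hE]
      rw [mul_assoc, ← Real.exp_add, sub_eq_add_neg]
    rw [h1]
    have h2 : Real.exp (F t - F b) ≤ Real.exp (∫ s in Ioc a b, max (-φ s) 0) :=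
      Real.exp_le_exp.2 (hD t ht)
    calc ψ t * Real.exp (F t - F b) ≤ |ψ t| * Real.exp (F t - F b) :=
          mul_le_mul_of_nonneg_right (le_abs_self _) (Real.exp_pos _).le
      _ ≤ ε * Real.exp (∫ s in Ioc a b, max (-φ s) 0) :=
          mul_le_mul (hψb t ht) h2 (Real.exp_pos _).le hε
  have hFb' : F b = ∫ t in Ioc a b, φ t := rfl
  rw [← hFb']
  linarith [stepB, stepC]

set_option maxHeartbeats 1000000

/-- Generalized Grönwall lemma (Foias–Manley–Temam–Treve).
`ξ` is locally absolutely continuous on `(0,∞)`, encoded by a density `ξ'`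
(locally integrable) satisfying the fundamental theorem of calculus on compact
subintervals of `(0,∞)`. -/
theorem generalized_gronwall
    (T : ℝ) (hT : 0 < T)
    (φ ψ ξ ξ' : ℝ → ℝ)
    (hφ : LocallyIntegrableOn φ (Ioi 0))
    (hliminf : 0 < liminf (fun t => ((∫ τ in t..(t + T), φ τ : ℝ) : EReal)) atTop)
    (hlimsup : limsup (fun t => ((∫ τ in t..(t + T), max (-φ τ) 0 : ℝ) : EReal)) atTop < ⊤)
    (hψmeas : Measurable ψ)
    (hψ : Tendsto ψ atTop (nhds 0))
    (hξ0 : ∀ t ∈ Ioi (0 : ℝ), 0 ≤ ξ t)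
    (hξ' : LocallyIntegrableOn ξ' (Ioi 0))
    (hFTC : ∀ a b : ℝ, 0 < a → a ≤ b → ξ b - ξ a = ∫ t in a..b, ξ' t)
    (hineq : ∀ᵐ t ∂volume, t ∈ Ioi (0 : ℝ) → ξ' t + φ t * ξ t ≤ ψ t) :
    Tendsto ξ atTop (nhds 0) := by
  -- integrability on subintervals
  have hII : ∀ c d : ℝ, 0 < c → IntegrableOn φ (Ioc c d) := by
    intro c d hc
    have hs : Icc c d ⊆ Ioi 0 := fun x hx => lt_of_lt_of_le hc hx.1
    exact (hφ.integrableOn_compact_subset hs isCompact_Icc).mono_set Ioc_subset_Icc_self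
  have hIID : ∀ c d : ℝ, 0 < c → IntegrableOn ξ' (Ioc c d) := by
    intro c d hc
    have hs : Icc c d ⊆ Ioi 0 := fun x hx => lt_of_lt_of_le hc hx.1
    exact (hξ'.integrableOn_compact_subset hs isCompact_Icc).mono_set Ioc_subset_Icc_self
  have hIIm : ∀ c d : ℝ, 0 < c → IntegrableOn (fun t => max (-φ t) 0) (Ioc c d) := by
    intro c d hc
    exact (hII c d hc).neg.pos_part
  -- extract γ
  obtain ⟨γ, h0γ, hγlim⟩ := EReal.lt_iff_exists_real_btwn.1 hliminf
  have hγpos : (0:ℝ) < γ := by exact_mod_cast h0γ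
  have heγ := eventually_lt_of_lt_liminf hγlim
  -- extract M
  obtain ⟨M, hlimM, _⟩ := EReal.lt_iff_exists_real_btwn.1 hlimsup
  have heM := eventually_lt_of_limsup_lt hlimM
  obtain ⟨t₀', ht₀'⟩ := eventually_atTop.1 (heγ.and heM)
  set t₁ : ℝ := max t₀' 1 with ht₁
  have ht₁pos : (0:ℝ) < t₁ := lt_of_lt_of_le one_pos (le_max_right _ _)
  have hwinγ : ∀ s : ℝ, t₁ ≤ s → γ ≤ ∫ t in Ioc s (s + T), φ t := by
    intro s hs
    have h := (ht₀' s (le_trans (le_max_left _ _) hs)).1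
    rw [← intervalIntegral.integral_of_le (by linarith : s ≤ s + T)]
    exact le_of_lt (by exact_mod_cast h)
  have hwinM : ∀ s : ℝ, t₁ ≤ s → (∫ t in Ioc s (s + T), max (-φ t) 0) ≤ M := by
    intro s hs
    have h := (ht₀' s (le_trans (le_max_left _ _) hs)).2
    rw [← intervalIntegral.integral_of_le (by linarith : s ≤ s + T)]
    exact le_of_lt (by exact_mod_cast h)
  have hM0 : 0 ≤ M := by
    refine le_trans (setIntegral_nonneg measurableSet_Ioc fun t _ => le_max_right _ _)
      (hwinM t₁ le_rfl)
  -- window estimates by induction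
  have W1 : ∀ n : ℕ, ∀ s u : ℝ, t₁ ≤ s → s ≤ u → u ≤ s + n * T →
      (∫ t in Ioc s u, max (-φ t) 0) ≤ n * M := by
    intro n
    induction n with
    | zero =>
      intro s u hs hsu hun
      have : u = s := le_antisymm (by simpa using hun) hsu
      subst this
      simp
    | succ n ih =>
      intro s u hs hsu hun
      have hspos : (0:ℝ) < s := lt_of_lt_of_le ht₁pos hs
      rcases le_or_gt u (s + T) with hc | hc
      · have h1 : (∫ t in Ioc s u, max (-φ t) 0) ≤ ∫ t in Ioc s (s + T), max (-φ t) 0 := by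
          refine setIntegral_mono_set (hIIm s (s+T) hspos) ?_
            (HasSubset.Subset.eventuallyLE (Ioc_subset_Ioc le_rfl hc))
          exact (ae_restrict_iff' measurableSet_Ioc).2
            (Eventually.of_forall fun t _ => le_max_right _ _)
        have h2 := hwinM s hs
        have : (0:ℝ) ≤ n * M := by positivity
        push_cast
        linarith
      · have hsplit := ioc_split (by linarith : s ≤ s + T) hc.le (hIIm s u hspos)
        have h1 := hwinM s hs
        have h2 := ih (s + T) u (by linarith) hc.le (by push_cast at hun ⊢; linarith)
        push_cast
        linarith
  have W2 : ∀ n : ℕ, ∀ s : ℝ, t₁ ≤ s → (n : ℝ) * γ ≤ ∫ t in Ioc s (s + n * T), φ t := by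
    intro n
    induction n with
    | zero => intro s hs; simp
    | succ n ih =>
      intro s hs
      have hspos : (0:ℝ) < s := lt_of_lt_of_le ht₁pos hs
      have hend : s + (((n:ℕ) + 1 : ℕ) : ℝ) * T = (s + T) + n * T := by push_cast; ring
      rw [hend]
      have hsplit := ioc_split (by linarith : s ≤ s + T)
        (by have := mul_nonneg (Nat.cast_nonneg (α := ℝ) n) hT.le; linarith : s + T ≤ s + T + (n:ℝ) * T) (hII s ((s + T) + n * T) hspos)
      have h1 := hwinγ s hs
      have h2 := ih (s + T) (by linarith)
      push_cast
      linarith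
  -- choose n with exp(-(n*γ)) ≤ 1/2 and n ≥ 1
  obtain ⟨n₀, hn₀⟩ := exists_nat_ge (Real.log 2 / γ)
  set n : ℕ := n₀ + 1 with hn
  have hnγ : Real.log 2 ≤ (n : ℝ) * γ := by
    have h1 : Real.log 2 ≤ (n₀ : ℝ) * γ := by
      rw [div_le_iff₀ hγpos] at hn₀; linarith
    have : (n₀ : ℝ) * γ ≤ (n : ℝ) * γ := by
      have : (n₀ : ℝ) ≤ n := by exact_mod_cast Nat.le_succ n₀
      nlinarith
    linarith
  have hhalf : Real.exp (-((n : ℝ) * γ)) ≤ 1 / 2 := by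
    rw [Real.exp_neg]
    rw [show (1:ℝ)/2 = (2:ℝ)⁻¹ by norm_num]
    refine inv_anti₀ two_pos ?_
    calc (2:ℝ) = Real.exp (Real.log 2) := (Real.exp_log two_pos).symm
      _ ≤ Real.exp ((n : ℝ) * γ) := Real.exp_le_exp.2 hnγ
  set L : ℝ := (n : ℝ) * T with hL
  have hLpos : 0 < L := by positivity
  set C : ℝ := Real.exp ((n : ℝ) * M) with hC
  have hC1 : (1:ℝ) ≤ C := Real.one_le_exp (by positivity)
  have hCpos : (0:ℝ) < C := lt_of_lt_of_le one_pos hC1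
  -- FTC in set-integral form
  have hFTC' : ∀ a : ℝ, 0 < a → ∀ s ∈ Icc a (a + L), ξ s = ξ a + ∫ t in Ioc a s, ξ' t := by
    intro a ha s hs
    have := hFTC a s ha hs.1
    rw [intervalIntegral.integral_of_le hs.1] at this
    linarith
  have hFTC'' : ∀ a t : ℝ, 0 < a → a ≤ t → ∀ s ∈ Icc a t, ξ s = ξ a + ∫ u in Ioc a s, ξ' u := by
    intro a t ha _ s hs
    have := hFTC a s ha hs.1
    rw [intervalIntegral.integral_of_le hs.1] at this
    linarith
  -- intermediate bound
  have hmid : ∀ ε : ℝ, 0 ≤ ε → ∀ N : ℝ, (∀ t ≥ N, |ψ t| ≤ ε) →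
      ∀ a, max t₁ N ≤ a → ∀ t ∈ Icc a (a + L), ξ t ≤ C * ξ a + ε * L * C := by
    intro ε hε N hN a ha t ht
    have ht₁a : t₁ ≤ a := le_trans (le_max_left _ _) ha
    have hNa : N ≤ a := le_trans (le_max_right _ _) ha
    have hapos : (0:ℝ) < a := lt_of_lt_of_le ht₁pos ht₁a
    have hat : a ≤ t := ht.1
    have hGW := gronwall_window hat (φ := φ) (ψ := ψ) (ξ := ξ) (ξd := ξ')
      (fun x hx => lt_of_lt_of_le hapos hx.1.le)
      (hII a t hapos) (hIID a t hapos)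
      (hFTC'' a t hapos hat) hψmeas hε
      (fun x hx => hN x (le_trans hNa hx.1.le)) hineq
    have hW1t : (∫ u in Ioc a t, max (-φ u) 0) ≤ (n : ℝ) * M :=
      W1 n a t ht₁a hat (by rw [hL] at ht; linarith [ht.2])
    have hnegφ : -(∫ u in Ioc a t, φ u) ≤ (n : ℝ) * M := by
      have h1 : -(∫ u in Ioc a t, φ u) ≤ ∫ u in Ioc a t, max (-φ u) 0 := by
        rw [← integral_neg]
        exact setIntegral_mono_on ((hII a t hapos).neg) (hIIm a t hapos)
          measurableSet_Ioc fun u _ => le_max_left _ _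
      linarith
    have he1 : Real.exp (-(∫ u in Ioc a t, φ u)) ≤ C := Real.exp_le_exp.2 hnegφ
    have he2 : Real.exp (∫ u in Ioc a t, max (-φ u) 0) ≤ C := Real.exp_le_exp.2 hW1t
    have hξa : 0 ≤ ξ a := hξ0 a hapos
    have htaL : t - a ≤ L := by rw [hL] at ht; linarith [ht.2]
    calc ξ t ≤ ξ a * Real.exp (-(∫ u in Ioc a t, φ u))
          + ε * (t - a) * Real.exp (∫ u in Ioc a t, max (-φ u) 0) := hGW
      _ ≤ C * ξ a + ε * L * C := by
          have h1 : ξ a * Real.exp (-(∫ u in Ioc a t, φ u)) ≤ ξ a * C :=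
            mul_le_mul_of_nonneg_left he1 hξa
          have h2 : ε * (t - a) * Real.exp (∫ u in Ioc a t, max (-φ u) 0) ≤ ε * L * C := by
            have hta : 0 ≤ t - a := by linarith
            refine mul_le_mul (mul_le_mul_of_nonneg_left htaL hε) he2
              (Real.exp_pos _).le (by positivity)
          linarith [h1, h2]
  -- decay bound
  have hdec : ∀ ε : ℝ, 0 ≤ ε → ∀ N : ℝ, (∀ t ≥ N, |ψ t| ≤ ε) →
      ∀ a, max t₁ N ≤ a → ξ (a + L) ≤ (1/2) * ξ a + ε * L * C := by
    intro ε hε N hN a ha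
    have ht₁a : t₁ ≤ a := le_trans (le_max_left _ _) ha
    have hNa : N ≤ a := le_trans (le_max_right _ _) ha
    have hapos : (0:ℝ) < a := lt_of_lt_of_le ht₁pos ht₁a
    have haL : a ≤ a + L := by linarith
    have hGW := gronwall_window haL (φ := φ) (ψ := ψ) (ξ := ξ) (ξd := ξ')
      (fun x hx => lt_of_lt_of_le hapos hx.1.le)
      (hII a (a + L) hapos) (hIID a (a + L) hapos)
      (hFTC'' a (a + L) hapos haL) hψmeas hε
      (fun x hx => hN x (le_trans hNa hx.1.le)) hineq
    have hW2a : (n : ℝ) * γ ≤ ∫ u in Ioc a (a + L), φ u := W2 n a ht₁a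
    have hstepγ : -(∫ u in Ioc a (a + L), φ u) ≤ -((n : ℝ) * γ) := by linarith
    have he1 : Real.exp (-(∫ u in Ioc a (a + L), φ u)) ≤ 1/2 :=
      le_trans (Real.exp_le_exp.2 hstepγ) hhalf
    have hW1a : (∫ u in Ioc a (a + L), max (-φ u) 0) ≤ (n : ℝ) * M :=
      W1 n a (a + L) ht₁a haL (by rw [hL])
    have he2 : Real.exp (∫ u in Ioc a (a + L), max (-φ u) 0) ≤ C := Real.exp_le_exp.2 hW1a
    have hξa : 0 ≤ ξ a := hξ0 a hapos
    calc ξ (a + L) ≤ ξ a * Real.exp (-(∫ u in Ioc a (a + L), φ u))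
          + ε * (a + L - a) * Real.exp (∫ u in Ioc a (a + L), max (-φ u) 0) := hGW
      _ ≤ (1/2) * ξ a + ε * L * C := by
          have h1 : ξ a * Real.exp (-(∫ u in Ioc a (a + L), φ u)) ≤ ξ a * (1/2) :=
            mul_le_mul_of_nonneg_left he1 hξa
          have h2 : ε * (a + L - a) * Real.exp (∫ u in Ioc a (a + L), max (-φ u) 0)
              ≤ ε * L * C := by
            have hsimp : a + L - a = L := by ring
            rw [hsimp]
            refine mul_le_mul_of_nonneg_left he2 (by positivity)
          linarith [h1, h2]
  -- iteration
  have hiter : ∀ ε : ℝ, 0 ≤ ε → ∀ N : ℝ, (∀ t ≥ N, |ψ t| ≤ ε) →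
      ∀ a, max t₁ N ≤ a → ∀ k : ℕ, ξ (a + k * L) ≤ (1/2)^k * ξ a + 2 * ε * L * C := by
    intro ε hε N hN a ha
    intro k
    induction k with
    | zero =>
      simp only [Nat.cast_zero, zero_mul, add_zero, pow_zero, one_mul]
      nlinarith [mul_nonneg (mul_nonneg hε hLpos.le) hCpos.le]
    | succ k ih =>
      have hstep : a + ((k:ℝ) + 1) * L = (a + (k:ℝ) * L) + L := by ring
      have hbase : max t₁ N ≤ a + (k:ℝ) * L := by
        have : (0:ℝ) ≤ (k:ℝ) * L := by positivity
        linarith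
      have hd := hdec ε hε N hN (a + (k:ℝ) * L) hbase
      have hpow : ((1:ℝ)/2)^(k+1) = (1/2) * (1/2)^k := by ring
      push_cast
      rw [hstep, hpow]
      linarith [ih, hd]
  -- conclusion
  rw [Metric.tendsto_atTop]
  intro δ hδ
  set ε : ℝ := δ / (6 * L * C * C) with hεdef
  have hεpos : 0 < ε := by positivity
  obtain ⟨N, hN⟩ := eventually_atTop.1 (Metric.tendsto_nhds.1 hψ ε hεpos)
  have hNψ : ∀ t ≥ N, |ψ t| ≤ ε := by
    intro t ht
    have h := hN t ht
    rw [Real.dist_eq, sub_zero] at h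
    exact h.le
  set A : ℝ := max t₁ N with hA
  have hApos : (0:ℝ) < A := lt_of_lt_of_le ht₁pos (le_max_left _ _)
  have hξA : 0 ≤ ξ A := hξ0 A hApos
  have hCξA : (0:ℝ) < 2 * (C * ξ A + 1) := by nlinarith [mul_nonneg hCpos.le hξA]
  obtain ⟨k₀, hk₀⟩ := exists_pow_lt_of_lt_one (div_pos hδ hCξA) (by norm_num : (1:ℝ)/2 < 1)
  have hk₀' : C * ((1/2:ℝ)^k₀ * ξ A) < δ / 2 := by
    have h1 : ((1:ℝ)/2)^k₀ * (C * ξ A) < δ / (2 * (C * ξ A + 1)) * (C * ξ A + 1) := by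
      have h2 : ((1:ℝ)/2)^k₀ * (C * ξ A) ≤ ((1:ℝ)/2)^k₀ * (C * ξ A + 1) := by
        nlinarith [pow_pos (show (0:ℝ) < 1/2 by norm_num) k₀]
      have h3 : ((1:ℝ)/2)^k₀ * (C * ξ A + 1) < δ / (2 * (C * ξ A + 1)) * (C * ξ A + 1) := by
        have : (0:ℝ) < C * ξ A + 1 := by positivity
        nlinarith
      linarith
    have h4 : δ / (2 * (C * ξ A + 1)) * (C * ξ A + 1) = δ / 2 := by
      field_simp
    nlinarith [h1, h4]
  refine ⟨A + k₀ * L, fun t htA => ?_⟩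
  -- identify the window index
  set k : ℕ := ⌊(t - A) / L⌋₊ with hk
  have htA0 : (0:ℝ) ≤ (k₀:ℝ) * L := by positivity
  have htnonneg : 0 ≤ t - A := by linarith
  have hk1 : (k:ℝ) * L ≤ t - A := by
    have h := Nat.floor_le (div_nonneg htnonneg hLpos.le)
    rw [← hk] at h
    exact (le_div_iff₀ hLpos).1 h
  have hk2 : t - A < ((k:ℝ) + 1) * L := by
    have h := Nat.lt_floor_add_one ((t - A) / L)
    rw [← hk] at h
    exact (div_lt_iff₀ hLpos).1 h
  have hkk₀ : k₀ ≤ k := by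
    rw [hk]
    refine Nat.le_floor ?_
    rw [le_div_iff₀ hLpos]
    linarith
  have hbase : max t₁ N ≤ A + (k:ℝ) * L := by
    have : (0:ℝ) ≤ (k:ℝ) * L := by positivity
    rw [← hA]; linarith
  have htmem : t ∈ Icc (A + (k:ℝ) * L) ((A + (k:ℝ) * L) + L) := by
    constructor <;> [linarith; linarith]
  have h1 := hmid ε hεpos.le N hNψ (A + (k:ℝ) * L) hbase t htmem
  have h2 := hiter ε hεpos.le N hNψ A (le_of_eq hA.symm) k
  have hpowmono : ((1:ℝ)/2)^k ≤ ((1:ℝ)/2)^k₀ :=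
    pow_le_pow_of_le_one (by norm_num) (by norm_num) hkk₀
  have hεLC : ε * L * C * C = δ / 6 := by
    rw [hεdef]
    field_simp
  have hεLC' : ε * L * C ≤ δ / 6 := by
    nlinarith [hεLC, hC1, mul_nonneg (mul_nonneg hεpos.le hLpos.le) hCpos.le]
  have hfinal : ξ t < δ := by
    have hb1 : ξ t ≤ C * ξ (A + (k:ℝ) * L) + ε * L * C := h1
    have hb2 : ξ (A + (k:ℝ) * L) ≤ (1/2)^k * ξ A + 2 * ε * L * C := h2
    have hb3 : C * ξ (A + (k:ℝ) * L) ≤ C * ((1/2)^k * ξ A + 2 * ε * L * C) :=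
      mul_le_mul_of_nonneg_left hb2 hCpos.le
    have hb3' : C * ((1/2:ℝ)^k * ξ A + 2 * ε * L * C)
        = C * ((1/2:ℝ)^k * ξ A) + 2 * (ε * L * C * C) := by ring
    have hb4 : C * ((1/2)^k * ξ A) ≤ C * ((1/2)^k₀ * ξ A) := by
      have : ((1:ℝ)/2)^k * ξ A ≤ ((1:ℝ)/2)^k₀ * ξ A :=
        mul_le_mul_of_nonneg_right hpowmono hξA
      exact mul_le_mul_of_nonneg_left this hCpos.le
    linarith [hb1, hb3, hb3', hb4, hk₀', hεLC, hεLC']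
  have hξt : 0 ≤ ξ t := hξ0 t (by
    have : (0:ℝ) < A := hApos
    have : A ≤ t := by linarith
    exact lt_of_lt_of_le hApos this)
  rw [Real.dist_eq, sub_zero, abs_of_nonneg hξt]
  exact hfinal
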